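/- Suppose a Tychonoff space X admits a countable family {U_i : i ∈ ℕ} of open subsets, points a_i ∈ U_i, and a point z ∈ X such that every compact subset of X meets only finitely many U_i, and z is a cluster point of the set {a_i : i ∈ ℕ}. Then X is not a sequentially Ascoli space. -/

import Mathlib

/-- A Tychonoff space admitting open sets `U i`, points `a i ∈ U i` and a point `z` such that
every compact set meets only finitely many `U i` and `z` is a cluster point of `{a i}`,
is not sequentially Ascoli. -/
theorem stmt_7 {X : Type*} [TopologicalSpace X] [T2Space X] [CompletelyRegularSpace X]
    (U : ℕ → Set X) (hU : ∀ i, IsOpen (U i))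
    (a : ℕ → X) (ha : ∀ i, a i ∈ U i)
    (hcpt : ∀ K : Set X, IsCompact K → {i | (K ∩ U i).Nonempty}.Finite)
    (z : X) (hz : ∀ V ∈ nhds z, ∃ i, a i ∈ V ∧ a i ≠ z) :
    ¬ (∀ (f : ℕ → C(X, ℝ)) (g : C(X, ℝ)), Filter.Tendsto f Filter.atTop (nhds g) →
        Equicontinuous (fun n => (f n : X → ℝ))) := by
  intro h
  have sep : ∀ i, ∃ f : X → ℝ, Continuous f ∧ f (a i) = 1 ∧ (∀ x ∉ U i, f x = 0) := by
    intro i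
    obtain ⟨f, hf, hf0, hf1⟩ := CompletelyRegularSpace.completely_regular (a i) (U i)ᶜ
      (hU i).isClosed_compl (by simp [ha i])
    refine ⟨fun x => 1 - (f x : ℝ), by continuity, by simp [hf0], fun x hx => ?_⟩
    have := hf1 hx
    simp [this]
  choose φ hφc hφa hφ0 using sep
  set f : ℕ → C(X, ℝ) := fun i => ⟨φ i, hφc i⟩ with hf
  have htend : Filter.Tendsto f Filter.atTop (nhds 0) := by
    rw [ContinuousMap.tendsto_iff_forall_isCompact_tendstoUniformlyOn]
    intro K hK
    have hfin := hcpt K hK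
    rw [Metric.tendstoUniformlyOn_iff]
    intro ε hε
    have hev : ∀ᶠ n in Filter.atTop, n ∉ {i | (K ∩ U i).Nonempty} := by
      rw [← Nat.cofinite_eq_atTop]; exact hfin.eventually_cofinite_notMem
    filter_upwards [hev] with n hn x hx
    have hxU : x ∉ U n := fun hxu => hn ⟨x, hx, hxu⟩
    simpa [hf, hφ0 n x hxU] using hε
  have heq := (h f 0 htend) z
  rw [Metric.equicontinuousAt_iff_right] at heq
  have h12 := heq (1/2) (by norm_num)
  obtain ⟨V, hV, hVp⟩ := Filter.eventually_iff_exists_mem.mp h12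
  -- S : indices with z ∈ U i, finite
  have hS : {i | z ∈ U i}.Finite := by
    have := hcpt {z} isCompact_singleton
    refine this.subset fun i hi => ⟨z, rfl, hi⟩
  -- bad points
  set F : Set X := a '' {i | z ∈ U i ∧ a i ≠ z} with hF
  have hFfin : F.Finite := (hS.subset (fun i hi => hi.1)).image a
  have hzF : z ∉ F := by
    rintro ⟨i, ⟨-, hne⟩, rfl⟩; exact hne rfl
  have hV' : V ∩ Fᶜ ∈ nhds z := by
    refine Filter.inter_mem hV ?_
    exact hFfin.isClosed.isOpen_compl.mem_nhds hzF
  obtain ⟨j, ⟨hjV, hjF⟩, hjz⟩ := hz _ hV'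
  have hjS : z ∉ U j := fun hmem => hjF ⟨j, ⟨hmem, hjz⟩, rfl⟩
  have hd := hVp (a j) hjV j
  have e1 : (f j) z = φ j z := rfl
  have e2 : (f j) (a j) = φ j (a j) := rfl
  rw [e1, e2, hφ0 j z hjS, hφa j] at hd
  norm_num [Real.dist_eq] at hd
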